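/- Let X_1, X_2 be i.i.d. nonnegative random variables with P(X_1 > v) = 1/(1 + v) for all v ≥ 0, and let Y_1, Y_2, Y_3, Y_4 be i.i.d. random variables each distributed as min(W, 1), where W satisfies P(W > v) = 1/(1 + v) for all v ≥ 0; suppose all six random variables X_1, X_2, Y_1, Y_2, Y_3, Y_4 are mutually independent. Then the expected second-highest value among the six is strictly less than 3/2. (Since the ex ante optimal revenue of the three original bidders — one slanted equal-revenue bidder and two bidders with triangle revenue curves peaking at (1/2, 1/2) — equals 2, this shows the Vickrey auction with all bidders duplicated does not 4/3-approximate the ex ante optimal revenue for n = 3.) -/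

import Mathlib

open MeasureTheory ProbabilityTheory

/-- The second-highest value of a finite family of reals: `max_{i ≠ j} min (x i) (x j)`. -/
noncomputable def secondHighest {I : Type*} (x : I → ℝ) : ℝ :=
  ⨆ p : {p : I × I // p.1 ≠ p.2}, min (x p.1.1) (x p.1.2)

open Set in
/-- **The Vickrey auction with all bidders duplicated does not `4/3`-approximate the ex
ante optimal revenue for `n = 3`.** `Z 0, Z 1` are i.i.d. slanted equal-revenue bidders
(`P(Z > v) = 1/(1+v)` for `v ≥ 0`) — an original bidder and her duplicate — and
`Z 2, …, Z 5` are i.i.d. distributed as `min(W, 1)` for `W` slanted equal-revenue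
(`P(Z > v) = 1/(1+v)` for `0 ≤ v < 1`, and `P(Z > v) = 0` for `v ≥ 1`) — two original
bidders and their duplicates; all six are mutually independent. The expected
second-highest value among the six is strictly less than `3/2`, while the ex ante
optimal revenue of the three original bidders is `2`. -/
theorem stmt_19 {Ω : Type*} [MeasurableSpace Ω] (μ : Measure Ω) [IsProbabilityMeasure μ]
    (Z : Fin 6 → Ω → ℝ)
    (hmeas : ∀ i, Measurable (Z i))
    (hnn : ∀ i ω, 0 ≤ Z i ω)
    (hindep : iIndepFun Z μ)
    (hslanted : ∀ i : Fin 6, i.val < 2 →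
      ∀ v : ℝ, 0 ≤ v → (μ {ω | v < Z i ω}).toReal = 1 / (1 + v))
    (htriangle : ∀ i : Fin 6, 2 ≤ i.val →
      (∀ v : ℝ, 0 ≤ v → v < 1 → (μ {ω | v < Z i ω}).toReal = 1 / (1 + v)) ∧
      (∀ v : ℝ, 1 ≤ v → μ {ω | v < Z i ω} = 0)) :
    ∫ ω, secondHighest (fun i => Z i ω) ∂μ < 3/2 := by
  set m : Ω → ℝ := fun ω => min (Z 0 ω) (Z 1 ω) with hm
  set g : Ω → ℝ := fun ω => max (m ω - 1) 0 with hgdef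
  have hg_nn : ∀ ω, 0 ≤ g ω := fun ω => le_max_right _ _
  have hg_meas : Measurable g := (((hmeas 0).min (hmeas 1)).sub measurable_const).max measurable_const
  -- tail of individual slanted bidders
  have hμZ : ∀ i : Fin 6, i.val < 2 → ∀ v : ℝ, 0 ≤ v →
      μ (Z i ⁻¹' Ioi v) = ENNReal.ofReal (1 / (1 + v)) := by
    intro i hi v hv
    have h := hslanted i hi v hv
    have : μ (Z i ⁻¹' Ioi v) = μ {ω | v < Z i ω} := rfl
    rw [this, ← h, ENNReal.ofReal_toReal (measure_ne_top μ _)]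
  -- tail of the min
  have hI01 : IndepFun (Z 0) (Z 1) μ := hindep.indepFun (by decide)
  have hmin : ∀ v : ℝ, 0 ≤ v →
      μ {ω | v < m ω} = ENNReal.ofReal (1 / (1 + v) ^ 2) := by
    intro v hv
    have hset : {ω | v < m ω} = Z 0 ⁻¹' Ioi v ∩ Z 1 ⁻¹' Ioi v := by
      ext ω; simp [hm, lt_min_iff, Set.mem_Ioi]
    rw [hset, hI01.measure_inter_preimage_eq_mul _ _ measurableSet_Ioi measurableSet_Ioi,
      hμZ 0 (by decide) v hv, hμZ 1 (by decide) v hv,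
      ← ENNReal.ofReal_mul (by positivity)]
    congr 1
    rw [div_mul_div_comm, one_mul, sq]
  -- layer cake for g
  have hlayer : ∫⁻ ω, ENNReal.ofReal (g ω) ∂μ = ∫⁻ t in Ioi (0:ℝ), μ {a | t < g a} :=
    lintegral_eq_lintegral_meas_lt μ (ae_of_all _ hg_nn) hg_meas.aemeasurable
  have htail_g : ∀ t ∈ Ioi (0:ℝ), μ {a | t < g a} = ENNReal.ofReal (1 / (2 + t) ^ 2) := by
    intro t ht
    have ht' : (0:ℝ) < t := ht
    have hset : {a | t < g a} = {a | (1 + t) < m a} := by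
      ext a
      simp only [hgdef, Set.mem_setOf_eq, lt_max_iff]
      constructor
      · rintro (h | h)
        · linarith
        · linarith
      · intro h; left; linarith
    rw [hset, hmin (1 + t) (by linarith)]
    congr 2
    ring
  -- the real improper integral
  have hderiv : ∀ x ∈ Ici (0:ℝ), HasDerivAt (fun t : ℝ => -(2 + t)⁻¹) (1 / (2 + x) ^ 2) x := by
    intro x hx
    have hx0 : (2 + x) ≠ 0 := by simp at hx; positivity
    have h1 : HasDerivAt (fun t : ℝ => 2 + t) 1 x := (hasDerivAt_id x).const_add 2
    have h2 := (h1.inv hx0).neg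
    exact h2.congr_deriv (by ring)
  have htend : Filter.Tendsto (fun t : ℝ => -(2 + t)⁻¹) Filter.atTop (nhds 0) := by
    have : Filter.Tendsto (fun t : ℝ => 2 + t) Filter.atTop Filter.atTop :=
      Filter.tendsto_atTop_add_const_left _ 2 Filter.tendsto_id
    simpa using (tendsto_inv_atTop_zero.comp this).neg
  have hpos : ∀ x ∈ Ioi (0:ℝ), 0 ≤ 1 / (2 + x) ^ 2 := by
    intro x hx; positivity
  have hIval : ∫ t in Ioi (0:ℝ), 1 / (2 + t) ^ 2 = 1 / 2 := by
    rw [integral_Ioi_of_hasDerivAt_of_nonneg' hderiv hpos htend]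
    norm_num
  have hIint : IntegrableOn (fun t : ℝ => 1 / (2 + t) ^ 2) (Ioi 0) :=
    integrableOn_Ioi_deriv_of_nonneg' hderiv hpos htend
  -- lintegral of g
  have hlg : ∫⁻ ω, ENNReal.ofReal (g ω) ∂μ = ENNReal.ofReal (1 / 2) := by
    rw [hlayer, setLIntegral_congr_fun measurableSet_Ioi htail_g,
      ← ofReal_integral_eq_lintegral_ofReal hIint (ae_of_all _ (fun x => by positivity)),
      hIval]
  have hg_int : Integrable g μ :=
    ⟨hg_meas.aestronglyMeasurable,
      (hasFiniteIntegral_iff_ofReal (ae_of_all _ hg_nn)).2 (by rw [hlg]; exact ENNReal.ofReal_lt_top)⟩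
  have hg_val : ∫ ω, g ω ∂μ = 1 / 2 := by
    rw [integral_eq_lintegral_of_nonneg_ae (ae_of_all _ hg_nn) hg_meas.aestronglyMeasurable, hlg]
    simp
  -- the event A
  set A : Set Ω := ⋂ i, Z i ⁻¹' Iic (1/2 : ℝ) with hAdef
  have hA_meas : MeasurableSet A := MeasurableSet.iInter fun i => hmeas i measurableSet_Iic
  have htail_half : ∀ i : Fin 6, μ (Z i ⁻¹' Ioi (1/2 : ℝ)) = ENNReal.ofReal (2/3) := by
    intro i
    have key : (μ {ω | (1/2:ℝ) < Z i ω}).toReal = 2/3 := by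
      rcases lt_or_ge i.val 2 with h | h
      · rw [hslanted i h (1/2) (by norm_num)]; norm_num
      · rw [(htriangle i h).1 (1/2) (by norm_num) (by norm_num)]; norm_num
    have : μ (Z i ⁻¹' Ioi (1/2 : ℝ)) = μ {ω | (1/2:ℝ) < Z i ω} := rfl
    rw [this, ← key, ENNReal.ofReal_toReal (measure_ne_top μ _)]
  have hIic : ∀ i : Fin 6, μ (Z i ⁻¹' Iic (1/2 : ℝ)) = ENNReal.ofReal (1/3) := by
    intro i
    have hc : Z i ⁻¹' Iic (1/2 : ℝ) = (Z i ⁻¹' Ioi (1/2 : ℝ))ᶜ := by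
      ext ω; simp [not_lt]
    rw [hc, prob_compl_eq_one_sub (hmeas i measurableSet_Ioi), htail_half i]
    rw [show (1 : ENNReal) = ENNReal.ofReal 1 by simp, ← ENNReal.ofReal_sub _ (by norm_num)]
    norm_num
  have hμA : μ A = ENNReal.ofReal ((1/3 : ℝ)^6) := by
    have h1 : A = ⋂ i ∈ (Finset.univ : Finset (Fin 6)), Z i ⁻¹' Iic (1/2 : ℝ) := by
      simp [hAdef]
    rw [h1, hindep.measure_inter_preimage_eq_mul Finset.univ (fun i _ => measurableSet_Iic)]
    simp only [hIic]
    rw [Finset.prod_const, ← ENNReal.ofReal_pow (by norm_num)]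
    norm_num
  -- a.e. bound on Y bidders
  have hY : ∀ᵐ ω ∂μ, ∀ i : Fin 6, 2 ≤ i.val → Z i ω ≤ 1 := by
    rw [ae_all_iff]
    intro i
    rcases le_or_gt 2 i.val with h | h
    · have h0 := (htriangle i h).2 1 le_rfl
      have hae : ∀ᵐ ω ∂μ, ¬ (1 < Z i ω) := by
        rw [ae_iff]; simpa using h0
      filter_upwards [hae] with ω hω _ using not_lt.mp hω
    · filter_upwards with ω h2 using absurd h2 (by omega)
  -- definition of the comparison function
  haveI : Nonempty {p : Fin 6 × Fin 6 // p.1 ≠ p.2} := ⟨⟨((0:Fin 6),(1:Fin 6)), by decide⟩⟩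
  set C : Ω → ℝ := fun ω => (g ω + 1) - 2⁻¹ * A.indicator (fun _ => (1:ℝ)) ω with hCdef
  have hC1 : Integrable (fun ω => g ω + 1) μ := hg_int.add (integrable_const 1)
  have hC2 : Integrable (fun ω => 2⁻¹ * A.indicator (fun _ => (1:ℝ)) ω) μ :=
    (((integrable_const (1:ℝ)).indicator hA_meas).const_mul _)
  have hC_int : Integrable C μ := hC1.sub hC2
  -- S nonneg
  have hS_nn : ∀ ω, 0 ≤ secondHighest (fun i => Z i ω) := by
    intro ω
    have hne : ((0 : Fin 6), (1 : Fin 6)).1 ≠ ((0 : Fin 6), (1 : Fin 6)).2 := by decide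
    have h0 : 0 ≤ min (Z 0 ω) (Z 1 ω) := le_min (hnn 0 ω) (hnn 1 ω)
    have h1 := le_ciSup (f := fun p : {p : Fin 6 × Fin 6 // p.1 ≠ p.2} =>
      min (Z p.1.1 ω) (Z p.1.2 ω)) (Set.Finite.bddAbove (Set.finite_range _))
      ⟨((0:Fin 6),(1:Fin 6)), hne⟩
    exact h0.trans h1
  -- the pointwise (a.e.) bound S ≤ C
  have hbound : ∀ᵐ ω ∂μ, secondHighest (fun i => Z i ω) ≤ C ω := by
    filter_upwards [hY] with ω hω
    have hSle : ∀ b : ℝ, (∀ p : {p : Fin 6 × Fin 6 // p.1 ≠ p.2},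
        min (Z p.1.1 ω) (Z p.1.2 ω) ≤ b) → secondHighest (fun i => Z i ω) ≤ b :=
      fun b hb => ciSup_le hb
    by_cases hωA : ω ∈ A
    · -- all values ≤ 1/2, so S ≤ 1/2 while C ≥ 1/2
      have hall : ∀ i : Fin 6, Z i ω ≤ 1/2 := by
        intro i
        have := Set.mem_iInter.mp hωA i
        simpa using this
      have h1 : secondHighest (fun i => Z i ω) ≤ 1/2 :=
        hSle _ (fun p => (min_le_left _ _).trans (hall _))
      have h2 : C ω = g ω + 1 - 2⁻¹ := by
        rw [hCdef]; simp [Set.indicator_of_mem hωA]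
      rw [h2]
      have := hg_nn ω
      linarith
    · have h2 : C ω = g ω + 1 := by
        rw [hCdef]; simp [Set.indicator_of_notMem hωA]
      rw [h2]
      apply hSle
      rintro ⟨⟨i, j⟩, hij⟩
      simp only
      have hmax : max (m ω) 1 ≤ g ω + 1 := by
        rw [hgdef]
        simp only [max_le_iff, le_max_iff]
        constructor
        · rcases le_or_gt (m ω) 1 with h | h
          · have : (0:ℝ) ≤ max (m ω - 1) 0 := le_max_right _ _
            linarith
          · have : m ω - 1 ≤ max (m ω - 1) 0 := le_max_left _ _
            linarith
        · have : (0:ℝ) ≤ max (m ω - 1) 0 := le_max_right _ _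
          linarith
      refine le_trans ?_ hmax
      by_cases hi : 2 ≤ i.val
      · exact (min_le_left _ _).trans ((hω i hi).trans (le_max_right _ _))
      · by_cases hj : 2 ≤ j.val
        · exact (min_le_right _ _).trans ((hω j hj).trans (le_max_right _ _))
        · have hvals : (i.val = 0 ∧ j.val = 1) ∨ (i.val = 1 ∧ j.val = 0) := by
            have h3 : i.val ≠ j.val := fun h => hij (Fin.ext h)
            omega
          rcases hvals with ⟨h1, h2⟩ | ⟨h1, h2⟩
          · have : i = 0 := Fin.ext h1
            have hj' : j = 1 := Fin.ext h2
            rw [this, hj']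
            exact le_max_left _ _
          · have : i = 1 := Fin.ext h1
            have hj' : j = 0 := Fin.ext h2
            rw [this, hj', min_comm]
            exact le_max_left _ _
  -- conclude
  have hint : ∫ ω, secondHighest (fun i => Z i ω) ∂μ ≤ ∫ ω, C ω ∂μ :=
    integral_mono_of_nonneg (ae_of_all _ hS_nn) hC_int hbound
  have hCval : ∫ ω, C ω ∂μ = 3/2 - 2⁻¹ * (1/3:ℝ)^6 := by
    rw [hCdef]
    rw [integral_sub hC1 hC2]
    rw [integral_add hg_int (integrable_const 1), hg_val]
    rw [integral_const_mul, integral_indicator_const _ hA_meas, measureReal_def, hμA]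
    simp [ENNReal.toReal_ofReal, measure_univ]
    norm_num
  rw [hCval] at hint
  calc ∫ ω, secondHighest (fun i => Z i ω) ∂μ ≤ 3/2 - 2⁻¹ * (1/3:ℝ)^6 := hint
    _ < 3/2 := by norm_num
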